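/- Let d ≥ 3 and 1 ≤ k ≤ ⌈(d−2)/2⌉ be integers and let p be an IDF prime for (d,k). Let α, β be nonzero rational numbers with v_p(α) < 0 and v_p(β) < 0. Then for every integer n ≥ 1 the orbit value f^n_{α,β}(0) is nonzero with v_p(f^n_{α,β}(0)) < 0, and v_p(f^{n+1}_{α,β}(0)) < v_p(f^n_{α,β}(0)); in particular, the critical point 0 is not periodic under f_{α,β} (f^n_{α,β}(0) ≠ 0 for all n ≥ 1). -/

import Mathlib

open Finset Function

/-- The coefficient `b_i` of `z^(d-i)` in the normalized dynamical Belyi polynomial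
`B_{d,k}`. -/
def belyiCoeff (d k i : ℕ) : ℚ :=
  ((-1 : ℚ) ^ (k - i) / ((k - i).factorial * i.factorial)) *
    ∏ j ∈ (Finset.range (k + 1)).erase i, ((d : ℚ) - (j : ℚ))

/-- The normalized dynamical Belyi polynomial `B_{d,k}` as a function on `ℚ`. -/
def belyi (d k : ℕ) (z : ℚ) : ℚ :=
  ∑ i ∈ Finset.range (k + 1), belyiCoeff d k i * z ^ (d - i)

/-- The map `f_{a,c}(z) = a · B_{d,k}(z) + c`. -/
def belyiMap (d k : ℕ) (a c z : ℚ) : ℚ := a * belyi d k z + c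

/-- `p` is an index divisor free (IDF) prime for the pair `(d,k)`:
`p` is a prime with `p > k`, `p ∣ d - r` for some `r ≤ k`, and `r ∤ v_p(d-r)`. -/
def IsIDFPrime (d k p : ℕ) : Prop :=
  p.Prime ∧ k < p ∧ ∃ r ≤ k, p ∣ (d - r) ∧ ¬ (r ∣ padicValNat p (d - r))

/-- A rational number is `p`-integral if it is zero or has nonnegative `p`-adic valuation. -/
def PIntegral (p : ℕ) (x : ℚ) : Prop := x = 0 ∨ 0 ≤ padicValRat p x

section aux
variable {p : ℕ} [hp : Fact p.Prime]

lemma sum_val_gt {s : Finset ℕ} {f : ℕ → ℚ} {c : ℤ}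
    (h : ∀ i ∈ s, f i ≠ 0 ∧ c < padicValRat p (f i)) :
    (∑ i ∈ s, f i) = 0 ∨ ((∑ i ∈ s, f i) ≠ 0 ∧ c < padicValRat p (∑ i ∈ s, f i)) := by
  induction s using Finset.cons_induction with
  | empty => exact Or.inl rfl
  | cons a s ha ih =>
    rw [Finset.sum_cons]
    rcases ih (fun i hi => h i (Finset.mem_cons_of_mem hi)) with h0 | ⟨hne, hlt⟩
    · rw [h0, add_zero]
      exact Or.inr ⟨(h a (Finset.mem_cons_self a s)).1, (h a (Finset.mem_cons_self a s)).2⟩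
    · by_cases hz : f a + ∑ i ∈ s, f i = 0
      · exact Or.inl hz
      · refine Or.inr ⟨hz, lt_of_lt_of_le ?_ (padicValRat.min_le_padicValRat_add hz)⟩
        exact lt_min (h a (Finset.mem_cons_self a s)).2 hlt

lemma sum_val_eq {s : Finset ℕ} {f : ℕ → ℚ} {i0 : ℕ} (hi0 : i0 ∈ s) (h0 : f i0 ≠ 0)
    (h : ∀ i ∈ s, i ≠ i0 → f i ≠ 0 ∧ padicValRat p (f i0) < padicValRat p (f i)) :
    (∑ i ∈ s, f i) ≠ 0 ∧ padicValRat p (∑ i ∈ s, f i) = padicValRat p (f i0) := by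
  rw [← Finset.add_sum_erase s f hi0]
  rcases sum_val_gt (c := padicValRat p (f i0))
      (fun i hi => h i (Finset.mem_of_mem_erase hi) (Finset.ne_of_mem_erase hi)) with
    hz | ⟨hne, hlt⟩
  · rw [hz, add_zero]; exact ⟨h0, rfl⟩
  · have hs : f i0 + ∑ i ∈ s.erase i0, f i ≠ 0 := by
      intro hcontra
      have heq : ∑ i ∈ s.erase i0, f i = -f i0 := by linarith [hcontra]
      rw [heq, padicValRat.neg] at hlt
      exact lt_irrefl _ hlt
    exact ⟨hs, padicValRat.add_eq_of_lt hs h0 hne hlt⟩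

lemma padicProdVal {s : Finset ℕ} {f : ℕ → ℚ} (h : ∀ i ∈ s, f i ≠ 0) :
    padicValRat p (∏ i ∈ s, f i) = ∑ i ∈ s, padicValRat p (f i) := by
  induction s using Finset.cons_induction with
  | empty => simp
  | cons a s ha ih =>
    rw [Finset.prod_cons, Finset.sum_cons,
      padicValRat.mul (h a (Finset.mem_cons_self a s))
        (Finset.prod_ne_zero_iff.mpr fun i hi => h i (Finset.mem_cons_of_mem hi)),
      ih (fun i hi => h i (Finset.mem_cons_of_mem hi))]

variable {d k r : ℕ}

lemma belyiCoeff_ne_zero (hkd : k < d) {i : ℕ} : belyiCoeff d k i ≠ 0 := by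
  unfold belyiCoeff
  apply mul_ne_zero
  · apply div_ne_zero
    · exact pow_ne_zero _ (by norm_num)
    · positivity
  · refine Finset.prod_ne_zero_iff.mpr fun j hj => ?_
    have hj' : j < k + 1 := Finset.mem_range.mp (Finset.mem_of_mem_erase hj)
    have : (j : ℚ) < (d : ℚ) := by exact_mod_cast (by omega : j < d)
    intro hcontra; linarith

lemma factor_eq {d j : ℕ} (hjd : j < d) : (d : ℚ) - (j : ℚ) = ((d - j : ℕ) : ℚ) := by
  push_cast [Nat.cast_sub hjd.le]
  ring

lemma val_factor_eq_zero (hkp : k < p) (hkd : k < d) (hr : r ≤ k) (hdvd : p ∣ (d - r))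
    {j : ℕ} (hj : j ≤ k) (hjr : j ≠ r) : padicValRat p ((d : ℚ) - (j : ℚ)) = 0 := by
  rw [factor_eq (by omega), padicValRat.of_nat]
  norm_cast
  apply padicValNat.eq_zero_of_not_dvd
  intro hdvdj
  rcases le_or_gt j r with hle | hlt
  · have h1 : p ∣ (d - j) - (d - r) := Nat.dvd_sub hdvdj hdvd
    have h2 : (d - j) - (d - r) = r - j := by omega
    rw [h2] at h1
    have := Nat.le_of_dvd (by omega) h1
    omega
  · have h1 : p ∣ (d - r) - (d - j) := Nat.dvd_sub hdvd hdvdj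
    have h2 : (d - r) - (d - j) = j - r := by omega
    rw [h2] at h1
    have := Nat.le_of_dvd (by omega) h1
    omega

lemma belyiCoeff_val (hkp : k < p) (hkd : k < d) (hr : r ≤ k) (hdvd : p ∣ (d - r))
    {i : ℕ} (hi : i ≤ k) :
    padicValRat p (belyiCoeff d k i)
      = if i = r then 0 else (padicValNat p (d - r) : ℤ) := by
  unfold belyiCoeff
  have hu : ((-1 : ℚ) ^ (k - i) / ((k - i).factorial * i.factorial)) ≠ 0 := by
    apply div_ne_zero (pow_ne_zero _ (by norm_num)); positivity
  have hfac : ∀ j ∈ (Finset.range (k + 1)).erase i, ((d : ℚ) - (j : ℚ)) ≠ 0 := by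
    intro j hj
    have hj' : j < k + 1 := Finset.mem_range.mp (Finset.mem_of_mem_erase hj)
    have : (j : ℚ) < (d : ℚ) := by exact_mod_cast (by omega : j < d)
    intro hcontra; linarith
  rw [padicValRat.mul hu (Finset.prod_ne_zero_iff.mpr hfac)]
  have hvu : padicValRat p ((-1 : ℚ) ^ (k - i) / ((k - i).factorial * i.factorial)) = 0 := by
    rw [padicValRat.div (pow_ne_zero _ (by norm_num)) (by positivity),
      padicValRat.pow]
    have h1 : padicValRat p (-1 : ℚ) = 0 := by
      rw [show (-1 : ℚ) = -(1 : ℚ) by norm_num, padicValRat.neg, padicValRat.one]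
    have h2 : padicValRat p (((k - i).factorial : ℚ) * (i.factorial : ℚ)) = 0 := by
      have hcast : ((k - i).factorial : ℚ) * (i.factorial : ℚ)
          = (((k - i).factorial * i.factorial : ℕ) : ℚ) := by push_cast; ring
      rw [hcast, padicValRat.of_nat]
      norm_cast
      apply padicValNat.eq_zero_of_not_dvd
      intro hdvd'
      rcases (Nat.Prime.dvd_mul hp.out).mp hdvd' with h | h
      · exact absurd (Nat.Prime.dvd_factorial hp.out |>.mp h) (by omega)
      · exact absurd (Nat.Prime.dvd_factorial hp.out |>.mp h) (by omega)
    rw [h1, h2]; ring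
  rw [hvu, zero_add, padicProdVal hfac]
  by_cases hir : i = r
  · rw [if_pos hir]
    apply Finset.sum_eq_zero
    intro j hj
    have hj' : j < k + 1 := Finset.mem_range.mp (Finset.mem_of_mem_erase hj)
    exact val_factor_eq_zero hkp hkd hr hdvd (by omega)
      (fun h => (Finset.ne_of_mem_erase hj) (h.trans hir.symm))
  · rw [if_neg hir]
    rw [Finset.sum_eq_single r]
    · rw [factor_eq (by omega), padicValRat.of_nat]
    · intro j hj hjr
      have hj' : j < k + 1 := Finset.mem_range.mp (Finset.mem_of_mem_erase hj)
      exact val_factor_eq_zero hkp hkd hr hdvd (by omega) hjr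
    · intro hrnot
      exact absurd (Finset.mem_erase.mpr
        ⟨fun h => hir h.symm, Finset.mem_range.mpr (by omega)⟩) hrnot

lemma belyi_val (hkp : k < p) (hkd : k < d) (hr : r ≤ k) (hdvd : p ∣ (d - r))
    (hnd : ¬ (r ∣ padicValNat p (d - r))) {z : ℚ} (hz : z ≠ 0)
    (hvz : padicValRat p z < 0) :
    belyi d k z ≠ 0 ∧
      padicValRat p (belyi d k z) ≤ ((d - r : ℕ) : ℤ) * padicValRat p z := by
  set V := padicValRat p z with hVdef
  set M : ℤ := (padicValNat p (d - r) : ℤ) with hMdef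
  have hM1 : 1 ≤ M := by
    have := one_le_padicValNat_of_dvd (p := p) (by omega : d - r ≠ 0) hdvd
    omega
  have hV1 : V ≤ -1 := by omega
  have hterm : ∀ i ∈ Finset.range (k + 1), belyiCoeff d k i * z ^ (d - i) ≠ 0 ∧
      padicValRat p (belyiCoeff d k i * z ^ (d - i))
        = (if i = r then 0 else M) + ((d : ℤ) - i) * V := by
    intro i hi
    have hik : i ≤ k := Nat.lt_succ_iff.mp (Finset.mem_range.mp hi)
    have hc : belyiCoeff d k i ≠ 0 := belyiCoeff_ne_zero hkd
    refine ⟨mul_ne_zero hc (pow_ne_zero _ hz), ?_⟩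
    rw [padicValRat.mul hc (pow_ne_zero _ hz), padicValRat.pow,
      belyiCoeff_val hkp hkd hr hdvd hik]
    have hcast : ((d - i : ℕ) : ℤ) = (d : ℤ) - i := by omega
    rw [← hVdef, hcast]
  have hmono : ∀ i : ℕ, 1 ≤ i → (d : ℤ) * V + i ≤ ((d : ℤ) - i) * V := by
    intro i hi
    have h1 : (i : ℤ) * 1 ≤ (i : ℤ) * (-V) := by
      apply mul_le_mul_of_nonneg_left (by linarith) (by exact_mod_cast Nat.zero_le i)
    rw [mul_one] at h1
    have hexp : ((d : ℤ) - i) * V = (d : ℤ) * V + i * (-V) := by ring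
    linarith
  have key : ∃ i0 ∈ Finset.range (k + 1),
      ((if i0 = r then 0 else M) + ((d : ℤ) - i0) * V ≤ ((d : ℤ) - r) * V) ∧
      ∀ i ∈ Finset.range (k + 1), i ≠ i0 →
        (if i0 = r then 0 else M) + ((d : ℤ) - i0) * V
          < (if i = r then 0 else M) + ((d : ℤ) - i) * V := by
    by_cases hr0 : r = 0
    · refine ⟨0, Finset.mem_range.mpr (by omega), ?_, ?_⟩
      · subst hr0; simp
      · intro i hi hine
        have hi1 : 1 ≤ i := by omega
        have hir : i ≠ r := by omega
        rw [if_pos hr0.symm, if_neg hir]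
        have := hmono i hi1
        have hi1' : (1 : ℤ) ≤ (i : ℤ) := by exact_mod_cast hi1
        push_cast
        linarith
    · -- r ≥ 1
      have hne : M + (d : ℤ) * V ≠ ((d : ℤ) - r) * V := by
        intro heq
        have hdvdM : (r : ℤ) ∣ M := ⟨-V, by linarith [heq]⟩
        rw [hMdef] at hdvdM
        exact hnd (Int.natCast_dvd_natCast.mp hdvdM)
      by_cases hlt : M + (d : ℤ) * V < ((d : ℤ) - r) * V
      · refine ⟨0, Finset.mem_range.mpr (by omega), ?_, ?_⟩
        · rw [if_neg (fun h => hr0 h.symm)]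
          push_cast
          linarith
        · intro i hi hine
          have hi1 : 1 ≤ i := by omega
          rw [if_neg (fun h => hr0 h.symm)]
          push_cast
          by_cases hir : i = r
          · rw [if_pos hir, hir]; linarith
          · rw [if_neg hir]
            have := hmono i hi1
            have hi1' : (1 : ℤ) ≤ (i : ℤ) := by exact_mod_cast hi1
            linarith
      · refine ⟨r, Finset.mem_range.mpr (by omega), ?_, ?_⟩
        · rw [if_pos rfl, zero_add]
        · intro i hi hine
          rw [if_pos rfl, zero_add, if_neg hine]
          have hle : ((d : ℤ) - r) * V < M + (d : ℤ) * V :=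
            lt_of_le_of_ne (not_lt.mp hlt) (Ne.symm hne)
          by_cases hi0 : i = 0
          · rw [hi0]; push_cast; linarith
          · have := hmono i (by omega)
            have hi1' : (1 : ℤ) ≤ (i : ℤ) := by exact_mod_cast (by omega : 1 ≤ i)
            linarith
  obtain ⟨i0, hi0mem, hbound, huniq⟩ := key
  have hsum := sum_val_eq (f := fun i => belyiCoeff d k i * z ^ (d - i)) hi0mem
    (hterm i0 hi0mem).1
    (fun i hi hine => ⟨(hterm i hi).1, by
      rw [(hterm i hi).2, (hterm i0 hi0mem).2]; exact huniq i hi hine⟩)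
  unfold belyi
  refine ⟨hsum.1, ?_⟩
  rw [hsum.2, (hterm i0 hi0mem).2]
  have hcast : ((d - r : ℕ) : ℤ) = (d : ℤ) - r := by omega
  rw [hcast]
  exact hbound

lemma belyi_step (hkp : k < p) (hkd : k + 2 ≤ d) (hr : r ≤ k) (hdvd : p ∣ (d - r))
    (hnd : ¬ (r ∣ padicValNat p (d - r))) {α β z : ℚ}
    (hα : α ≠ 0) (hvα : padicValRat p α < 0) (hβ : β ≠ 0) (hvβ : padicValRat p β < 0)
    (hz : z ≠ 0) (hvz : padicValRat p z ≤ padicValRat p β) :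
    belyiMap d k α β z ≠ 0 ∧
      padicValRat p (belyiMap d k α β z) < padicValRat p z := by
  have hvz0 : padicValRat p z < 0 := lt_of_le_of_lt hvz hvβ
  obtain ⟨hB, hBval⟩ := belyi_val hkp (by omega) hr hdvd hnd hz hvz0
  have hAB : α * belyi d k z ≠ 0 := mul_ne_zero hα hB
  have hABv : padicValRat p (α * belyi d k z)
      = padicValRat p α + padicValRat p (belyi d k z) := padicValRat.mul hα hB
  have hdr2 : (2 : ℤ) ≤ ((d - r : ℕ) : ℤ) := by omega
  have h2V : ((d - r : ℕ) : ℤ) * padicValRat p z ≤ 2 * padicValRat p z := by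
    have := mul_le_mul_of_nonpos_right hdr2 (le_of_lt hvz0)
    linarith
  have hsmall : padicValRat p (α * belyi d k z)
      ≤ padicValRat p α + 2 * padicValRat p z := by
    rw [hABv]; linarith
  have hlt1 : padicValRat p (α * belyi d k z) < padicValRat p β := by linarith
  have hlt2 : padicValRat p (α * belyi d k z) < padicValRat p z := by linarith
  have hne : belyiMap d k α β z ≠ 0 := by
    unfold belyiMap
    intro hcontra
    have heq : β = -(α * belyi d k z) := by linarith [hcontra]
    rw [heq, padicValRat.neg] at hlt1
    exact lt_irrefl _ hlt1
  refine ⟨hne, ?_⟩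
  have : padicValRat p (belyiMap d k α β z) = padicValRat p (α * belyi d k z) := by
    unfold belyiMap at hne ⊢
    exact padicValRat.add_eq_of_lt hne hAB hβ hlt1
  rw [this]
  exact hlt2

end aux

/-- (Case 1 of the integrality proof.)  If `v_p(α) < 0` and
`v_p(β) < 0`, then the valuation of the orbit of `0` is negative and strictly
decreasing; in particular `0` is not periodic. -/
theorem orbit_of_zero_val_strict_anti (d k p : ℕ) (hd : 3 ≤ d) (hk1 : 1 ≤ k)
    (hk2 : k ≤ (d - 1) / 2) (hp : IsIDFPrime d k p)
    (α β : ℚ) (hα : α ≠ 0) (hβ : β ≠ 0)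
    (hvα : padicValRat p α < 0) (hvβ : padicValRat p β < 0) :
    ∀ n : ℕ, 1 ≤ n →
      (belyiMap d k α β)^[n] 0 ≠ 0 ∧
      padicValRat p ((belyiMap d k α β)^[n] 0) < 0 ∧
      padicValRat p ((belyiMap d k α β)^[n + 1] 0) <
        padicValRat p ((belyiMap d k α β)^[n] 0) := by
  obtain ⟨hpp, hkp, r, hr, hdvd, hnd⟩ := hp
  haveI : Fact p.Prime := ⟨hpp⟩
  have hkd : k + 2 ≤ d := by omega
  have h0 : belyiMap d k α β 0 = β := by
    unfold belyiMap belyi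
    rw [Finset.sum_eq_zero, mul_zero, zero_add]
    intro i hi
    have hi' : i < k + 1 := Finset.mem_range.mp hi
    rw [zero_pow (by omega : d - i ≠ 0), mul_zero]
  have main : ∀ n, 1 ≤ n → (belyiMap d k α β)^[n] 0 ≠ 0 ∧
      padicValRat p ((belyiMap d k α β)^[n] 0) ≤ padicValRat p β := by
    intro n hn
    induction n with
    | zero => omega
    | succ n ih =>
      by_cases hn0 : n = 0
      · subst hn0
        rw [Function.iterate_one, h0]
        exact ⟨hβ, le_refl _⟩
      · obtain ⟨h1, h2⟩ := ih (by omega)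
        rw [Function.iterate_succ_apply']
        have hstep := belyi_step hkp hkd hr hdvd hnd hα hvα hβ hvβ h1 h2
        exact ⟨hstep.1, le_trans (le_of_lt hstep.2) h2⟩
  intro n hn
  obtain ⟨h1, h2⟩ := main n hn
  have hstep := belyi_step hkp hkd hr hdvd hnd hα hvα hβ hvβ h1 h2
  refine ⟨h1, lt_of_le_of_lt h2 hvβ, ?_⟩
  rw [Function.iterate_succ_apply']
  exact hstep.2
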